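/- Moment formula for the Poisson state: for a state ω on a unital algebra N with ω(1) = λ, and elements x_1,...,x_n ∈ N, define λ_m(x) := Σ_{j=1}^m π_j(x) ∈ N^{⊗m} where π_j embeds x into the j-th tensor factor. Then e^{-λ} Σ_{m≥0} (1/m!) ω^{⊗m}(λ_m(x_1)···λ_m(x_n)) = Σ_{σ ∈ P(n)} Π_{A∈σ} ω(→Π_{i∈A} x_i), where P(n) is the set of set partitions of {1,...,n} and →Π denotes the ordered product over each block A with the order inherited from {1,...,n}. -/

import Mathlib

set_option linter.unusedSectionVars false
set_option linter.unusedVariables false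


open scoped TensorProduct
open PiTensorProduct Finset

variable {N : Type*} [Ring N] [Algebra ℂ N]

/-- The embedding `π_j : N → N^{⊗m}`, `x ↦ 1 ⊗ ⋯ ⊗ x ⊗ ⋯ ⊗ 1` (`x` in position `j`). -/
noncomputable def piEmbed (m : ℕ) (j : Fin m) (x : N) : ⨂[ℂ] _ : Fin m, N :=
  tprod ℂ (fun i => if i = j then x else 1)

/-- `λ_m(x) := ∑_{j=1}^m π_j(x) ∈ N^{⊗m}`. -/
noncomputable def lamM (m : ℕ) (x : N) : ⨂[ℂ] _ : Fin m, N :=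
  ∑ j : Fin m, piEmbed m j x

/-- The tensor power functional `ω^{⊗m} : N^{⊗m} → ℂ`, `⊗_j a_j ↦ ∏_j ω(a_j)`. -/
noncomputable def tensorFunctional (ω : N →ₗ[ℂ] ℂ) (m : ℕ) :
    (⨂[ℂ] _ : Fin m, N) →ₗ[ℂ] ℂ :=
  PiTensorProduct.lift ((MultilinearMap.mkPiAlgebra ℂ (Fin m) ℂ).compLinearMap fun _ => ω)

/-- Ordered product `→∏_{i ∈ A} x_i` over a block `A ⊆ [n]`, with the order inherited
from `[n]`. -/
noncomputable def ordProd {n : ℕ} (x : Fin n → N) (A : Finset (Fin n)) : N :=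
  ((A.sort (· ≤ ·)).map x).prod

section Aux


lemma ordProd_empty {n : ℕ} (x : Fin n → N) : ordProd x ∅ = 1 := by
  simp [ordProd, Finset.sort_empty]

lemma sort_map_succ {n : ℕ} (A : Finset (Fin n)) :
    ((A.map ⟨Fin.succ, Fin.succ_injective n⟩).sort (· ≤ ·)) = (A.sort (· ≤ ·)).map Fin.succ := by
  refine (fun hp h1 h2 => List.Perm.eq_of_pairwise' (r := (· ≤ ·)) h1 h2 hp) ?_ ?_ ?_
  · rw [← Multiset.coe_eq_coe, ← Multiset.map_coe]
    rw [Finset.sort_eq, Finset.sort_eq, Finset.map_val]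
    rfl
  · exact Finset.pairwise_sort _ _
  · exact List.Pairwise.map _ (fun a b (h : a ≤ b) => Fin.succ_le_succ_iff.mpr h) (Finset.pairwise_sort _ _)

lemma ordProd_map_succ {n : ℕ} (x : Fin (n+1) → N) (A : Finset (Fin n)) :
    ordProd x (A.map ⟨Fin.succ, Fin.succ_injective n⟩) = ordProd (fun i => x i.succ) A := by
  rw [ordProd, sort_map_succ, List.map_map, ordProd]
  rfl

lemma ordProd_insert_zero {n : ℕ} (x : Fin (n+1) → N) (A : Finset (Fin (n+1))) (h : (0 : Fin (n+1)) ∉ A) :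
    ordProd x (insert 0 A) = x 0 * ordProd x A := by
  rw [ordProd, Finset.sort_insert (· ≤ ·) (fun b _ => Fin.zero_le b) h, List.map_cons, List.prod_cons, ordProd]




lemma tensorFunctional_tprod (ω : N →ₗ[ℂ] ℂ) (m : ℕ) (a : Fin m → N) :
    tensorFunctional ω m (tprod ℂ a) = ∏ j, ω (a j) := by
  simp [tensorFunctional]

lemma fiber_cons_of_ne {n m : ℕ} (j₀ : Fin m) (g : Fin n → Fin m) (j : Fin m) (h : j ≠ j₀) :
    (univ.filter fun i : Fin (n+1) => Fin.cons (α := fun _ => Fin m) j₀ g i = j)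
      = (univ.filter fun i => g i = j).map ⟨Fin.succ, Fin.succ_injective n⟩ := by
  ext i
  induction i using Fin.cases with
  | zero =>
    simp only [Fin.cons_zero, Finset.mem_filter, Finset.mem_univ, true_and, Finset.mem_map,
      Function.Embedding.coeFn_mk]
    constructor
    · intro hh; exact absurd hh (Ne.symm h)
    · rintro ⟨a, -, ha⟩; exact absurd ha (Fin.succ_ne_zero a)
  | succ k => simp [Fin.cons_succ, Fin.succ_inj]

lemma fiber_cons_of_eq {n m : ℕ} (j₀ : Fin m) (g : Fin n → Fin m) :
    (univ.filter fun i : Fin (n+1) => Fin.cons (α := fun _ => Fin m) j₀ g i = j₀)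
      = insert 0 ((univ.filter fun i => g i = j₀).map ⟨Fin.succ, Fin.succ_injective n⟩) := by
  ext i
  induction i using Fin.cases with
  | zero => simp [Fin.cons_zero]
  | succ k => simp [Fin.cons_succ, Fin.succ_inj, (Fin.succ_ne_zero k)]

lemma ordProd_fiber_cons {n m : ℕ} (x : Fin (n+1) → N) (j₀ : Fin m) (g : Fin n → Fin m) (j : Fin m) :
    ordProd x (univ.filter fun i => Fin.cons (α := fun _ => Fin m) j₀ g i = j)
      = (if j = j₀ then x 0 else 1) * ordProd (fun i => x i.succ) (univ.filter fun i => g i = j) := by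
  by_cases h : j = j₀
  · subst h
    rw [fiber_cons_of_eq, ordProd_insert_zero, ordProd_map_succ, if_pos rfl]
    simp [Fin.succ_ne_zero, eq_comm]
  · rw [fiber_cons_of_ne _ _ _ h, ordProd_map_succ, if_neg h, one_mul]

lemma prod_lamM (m : ℕ) : ∀ (n : ℕ) (x : Fin n → N),
    (List.ofFn fun i : Fin n => lamM m (x i)).prod
      = ∑ f : Fin n → Fin m, tprod ℂ (fun j => ordProd x (univ.filter fun i => f i = j)) := by
  intro n
  induction n with
  | zero =>
    intro x
    rw [Fintype.sum_unique]
    simp only [List.ofFn_zero, List.prod_nil]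
    have : ∀ j : Fin m, ordProd x (univ.filter fun i : Fin 0 => (default : Fin 0 → Fin m) i = j) = 1 := by
      intro j
      have : (univ.filter fun i : Fin 0 => (default : Fin 0 → Fin m) i = j) = ∅ := by
        apply Finset.eq_empty_of_forall_notMem
        intro i; exact i.elim0
      rw [this, ordProd_empty]
    rw [show (fun j => ordProd x (univ.filter fun i : Fin 0 => (default : Fin 0 → Fin m) i = j)) = fun _ => (1 : N) from funext this]
    exact (PiTensorProduct.one_def).symm
  | succ n ih =>
    intro x
    rw [List.ofFn_succ, List.prod_cons, ih (fun i => x i.succ)]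
    rw [← Equiv.sum_comp (Fin.consEquiv fun _ : Fin (n+1) => Fin m)
        (fun f => tprod ℂ (fun j => ordProd x (univ.filter fun i => f i = j)))]
    rw [Fintype.sum_prod_type]
    rw [lamM, Finset.sum_mul]
    refine Finset.sum_congr rfl fun j₀ _ => ?_
    rw [Finset.mul_sum]
    refine Finset.sum_congr rfl fun g _ => ?_
    show piEmbed m j₀ (x 0) * PiTensorProduct.tprod ℂ _ = _
    rw [piEmbed, PiTensorProduct.tprod_mul_tprod]
    congr 1
    funext j
    show (if j = j₀ then x 0 else 1) * _ = _
    rw [← ordProd_fiber_cons x j₀ g j]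
    rfl

section Ker

variable {n m : ℕ}

def fib (f : Fin n → Fin m) (j : Fin m) : Finset (Fin n) := univ.filter fun i => f i = j

instance kerDec (f : Fin n → Fin m) : DecidableRel (Setoid.ker f).r :=
  fun a b => decidable_of_iff (f a = f b) Iff.rfl

noncomputable def kerPart (f : Fin n → Fin m) : Finpartition (univ : Finset (Fin n)) :=
  Finpartition.ofSetoid (Setoid.ker f)

lemma part_kerPart (f : Fin n → Fin m) (a : Fin n) : (kerPart f).part a = fib f (f a) := by
  ext b
  rw [kerPart, Finpartition.mem_part_ofSetoid_iff_rel]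
  simp only [Setoid.ker_def, fib, Finset.mem_filter, Finset.mem_univ, true_and]
  exact eq_comm

lemma parts_eq_image_part (σ : Finpartition (univ : Finset (Fin n))) :
    σ.parts = univ.image σ.part := by
  ext A
  simp only [Finset.mem_image, Finset.mem_univ, true_and]
  constructor
  · intro hA
    obtain ⟨a, ha⟩ := σ.nonempty_of_mem_parts hA
    exact ⟨a, (σ.part_eq_of_mem hA ha).symm ▸ rfl⟩
  · rintro ⟨a, rfl⟩
    exact σ.part_mem.2 (Finset.mem_univ a)

lemma image_eq_J (f : Fin n → Fin m) :
    univ.image f = univ.filter fun j => (fib f j).Nonempty := by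
  ext j
  simp [fib, Finset.filter_nonempty_iff, eq_comm]

lemma kerPart_parts (f : Fin n → Fin m) :
    (kerPart f).parts = (univ.filter fun j => (fib f j).Nonempty).image (fib f) := by
  rw [parts_eq_image_part]
  have h1 : (kerPart f).part = fun a => fib f (f a) := funext (part_kerPart f)
  rw [h1, ← image_eq_J, Finset.image_image]
  rfl

lemma fib_injOn (f : Fin n → Fin m) :
    Set.InjOn (fib f) ↑(univ.filter fun j => (fib f j).Nonempty) := by
  intro j hj j' _ h
  rw [Finset.mem_coe, Finset.mem_filter] at hj
  obtain ⟨i, hi⟩ := hj.2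
  have hij : f i = j := (Finset.mem_filter.mp hi).2
  have hij' : f i = j' := by
    have : i ∈ fib f j' := h ▸ hi
    exact (Finset.mem_filter.mp this).2
  rw [← hij, hij']

lemma card_parts_kerPart (f : Fin n → Fin m) :
    (kerPart f).parts.card = (univ.filter fun j => (fib f j).Nonempty).card := by
  rw [kerPart_parts, Finset.card_image_of_injOn (fib_injOn f)]

lemma prod_fib_eq (ω : N →ₗ[ℂ] ℂ) (lam : ℝ) (hω1 : ω 1 = (lam : ℂ)) (x : Fin n → N)
    (f : Fin n → Fin m) :
    (∏ j : Fin m, ω (ordProd x (fib f j)))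
      = (∏ A ∈ (kerPart f).parts, ω (ordProd x A))
          * (lam : ℂ) ^ (m - (kerPart f).parts.card) := by
  classical
  rw [← Finset.prod_filter_mul_prod_filter_not univ (fun j => (fib f j).Nonempty)]
  congr 1
  · rw [kerPart_parts, Finset.prod_image (fun a ha b hb h => fib_injOn f (Finset.mem_coe.mpr ha) (Finset.mem_coe.mpr hb) h)]
  · have hcard : (univ.filter fun j => ¬ (fib f j).Nonempty).card
        = m - (kerPart f).parts.card := by
      have h2 := Finset.card_filter_add_card_filter_not (s := (univ : Finset (Fin m)))
        (p := fun j => (fib f j).Nonempty)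
      rw [card_parts_kerPart]
      simp only [Finset.card_univ, Fintype.card_fin] at h2
      omega
    rw [Finset.prod_congr rfl (fun j hj => ?_), Finset.prod_const, hcard]
    rw [Finset.mem_filter] at hj
    rw [Finset.not_nonempty_iff_eq_empty.mp hj.2, ordProd_empty, hω1]

end Ker

section Count

variable {n : ℕ}

lemma part_eq_fib {m : ℕ} {f : Fin n → Fin m} {σ : Finpartition (univ : Finset (Fin n))}
    (hf : kerPart f = σ) (a : Fin n) : σ.part a = fib f (f a) := by
  rw [← hf]; exact part_kerPart f a

noncomputable def kerEquiv (σ : Finpartition (univ : Finset (Fin n))) (m : ℕ) :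
    {f : Fin n → Fin m // kerPart f = σ} ≃ (↥σ.parts ↪ Fin m) where
  toFun := fun ⟨f, hf⟩ =>
    ⟨fun A => f (A.1.min' (σ.nonempty_of_mem_parts A.2)), by
      intro A B hAB
      apply Subtype.ext
      have hA : A.1 = fib f (f (A.1.min' (σ.nonempty_of_mem_parts A.2))) := by
        rw [← part_eq_fib hf]
        exact (σ.part_eq_of_mem A.2 (A.1.min'_mem _)).symm
      have hB : B.1 = fib f (f (B.1.min' (σ.nonempty_of_mem_parts B.2))) := by
        rw [← part_eq_fib hf]
        exact (σ.part_eq_of_mem B.2 (B.1.min'_mem _)).symm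
      rw [hA, hB]
      exact congrArg (fib f) hAB⟩
  invFun := fun g =>
    ⟨fun i => g ⟨σ.part i, σ.part_mem.2 (Finset.mem_univ i)⟩, by
      set f : Fin n → Fin m := fun i => g ⟨σ.part i, σ.part_mem.2 (Finset.mem_univ i)⟩ with hfdef
      have key : ∀ a : Fin n, fib f (f a) = σ.part a := by
        intro a
        ext b
        simp only [fib, Finset.mem_filter, Finset.mem_univ, true_and]
        rw [σ.mem_part_iff_part_eq_part (Finset.mem_univ b) (Finset.mem_univ a)]
        constructor
        · intro h
          have := g.injective (a₁ := ⟨σ.part b, σ.part_mem.2 (Finset.mem_univ b)⟩)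
            (a₂ := ⟨σ.part a, σ.part_mem.2 (Finset.mem_univ a)⟩) h
          exact Subtype.ext_iff.mp this
        · intro h
          show g _ = g _
          congr 1
          exact Subtype.ext h
      apply Finpartition.ext
      rw [kerPart_parts, ← image_eq_J, Finset.image_image, parts_eq_image_part σ]
      apply Finset.image_congr
      intro a _
      exact key a⟩
  left_inv := by
    rintro ⟨f, hf⟩
    apply Subtype.ext
    funext i
    show f ((σ.part i).min' _) = f i
    have h1 : (σ.part i).min' (σ.nonempty_of_mem_parts (σ.part_mem.2 (Finset.mem_univ i))) ∈ σ.part i :=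
      Finset.min'_mem _ _
    have h2 : (σ.part i).min' (σ.nonempty_of_mem_parts (σ.part_mem.2 (Finset.mem_univ i)))
        ∈ fib f (f i) := by
      rw [← part_eq_fib hf]; exact h1
    exact (Finset.mem_filter.mp h2).2
  right_inv := by
    intro g
    apply DFunLike.ext
    intro A
    show g ⟨σ.part (A.1.min' _), _⟩ = g A
    congr 1
    apply Subtype.ext
    exact σ.part_eq_of_mem A.2 (A.1.min'_mem _)

lemma card_ker_eq (σ : Finpartition (univ : Finset (Fin n))) (m : ℕ) :
    (univ.filter fun f : Fin n → Fin m => kerPart f = σ).card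
      = m.descFactorial σ.parts.card := by
  classical
  rw [← Fintype.card_subtype, Fintype.card_congr (kerEquiv σ m), Fintype.card_embedding_eq,
    Fintype.card_coe, Fintype.card_fin]

end Count

section Analytic

lemma F_shift (lam : ℝ) (k : ℕ) (c : ℂ) (t : ℕ) :
    (1 / ((t + k).factorial) : ℂ) * ((((t + k).descFactorial k : ℕ) : ℂ)
        * (c * (lam : ℂ) ^ (t + k - k)))
      = c * ((lam : ℂ) ^ t / t.factorial) := by
  have hd : (((t + k).factorial : ℕ) : ℂ)
      = ((t.factorial : ℕ) : ℂ) * (((t + k).descFactorial k : ℕ) : ℂ) := by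
    rw [← Nat.cast_mul, ← Nat.factorial_mul_descFactorial (Nat.le_add_left k t),
      Nat.add_sub_cancel]
  have h2 : ((t.factorial : ℕ) : ℂ) ≠ 0 := Nat.cast_ne_zero.mpr t.factorial_ne_zero
  have h3 : (((t + k).descFactorial k : ℕ) : ℂ) ≠ 0 :=
    Nat.cast_ne_zero.mpr (by rw [Ne, Nat.descFactorial_eq_zero_iff_lt]; omega)
  rw [Nat.add_sub_cancel, hd]
  field_simp

lemma F_zero (lam : ℝ) (k : ℕ) (c : ℂ) (m : ℕ)
    (hm : m ∉ Set.range (fun t : ℕ => t + k)) :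
    (1 / (m.factorial) : ℂ) * (((m.descFactorial k : ℕ) : ℂ) * (c * (lam : ℂ) ^ (m - k))) = 0 := by
  have hmk : m < k := by
    by_contra h
    exact hm ⟨m - k, show m - k + k = m by omega⟩
  rw [Nat.descFactorial_eq_zero_iff_lt.mpr hmk]
  simp

lemma desc_summable (lam : ℝ) (k : ℕ) (c : ℂ) :
    Summable (fun m : ℕ =>
      (1 / (m.factorial) : ℂ) * (((m.descFactorial k : ℕ) : ℂ) * (c * (lam : ℂ) ^ (m - k)))) := by
  rw [← Function.Injective.summable_iff (add_left_injective k) (F_zero lam k c)]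
  have he : ((fun m : ℕ =>
      (1 / (m.factorial) : ℂ) * (((m.descFactorial k : ℕ) : ℂ) * (c * (lam : ℂ) ^ (m - k))))
        ∘ (fun t : ℕ => t + k))
      = fun t : ℕ => c * ((lam : ℂ) ^ t / t.factorial) := funext fun t => F_shift lam k c t
  rw [he]
  exact (NormedSpace.expSeries_div_summable ((lam : ℂ))).mul_left c

lemma desc_tsum (lam : ℝ) (k : ℕ) (c : ℂ) :
    ∑' m : ℕ, (1 / (m.factorial) : ℂ) * (((m.descFactorial k : ℕ) : ℂ) * (c * (lam : ℂ) ^ (m - k)))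
      = Complex.exp lam * c := by
  rw [← Function.Injective.tsum_eq (add_left_injective k) (Function.support_subset_iff'.mpr (F_zero lam k c))]
  have he : ∀ t : ℕ,
      (1 / ((t + k).factorial) : ℂ) * ((((t + k).descFactorial k : ℕ) : ℂ)
        * (c * (lam : ℂ) ^ (t + k - k)))
      = c * ((lam : ℂ) ^ t / t.factorial) := F_shift lam k c
  rw [tsum_congr he, tsum_mul_left]
  have : ∑' t : ℕ, ((lam : ℂ) ^ t / t.factorial) = Complex.exp lam := by
    rw [Complex.exp_eq_exp_ℂ, NormedSpace.exp_eq_tsum_div]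
  rw [this, mul_comm]

end Analytic

lemma key_expand (ω : N →ₗ[ℂ] ℂ) (m : ℕ) {n : ℕ} (x : Fin n → N) :
    tensorFunctional ω m ((List.ofFn fun i : Fin n => lamM m (x i)).prod)
      = ∑ f : Fin n → Fin m, ∏ j : Fin m, ω (ordProd x (fib f j)) := by
  rw [prod_lamM, map_sum]
  refine Finset.sum_congr rfl fun f _ => ?_
  rw [tensorFunctional_tprod]
  rfl

lemma sum_over_f (ω : N →ₗ[ℂ] ℂ) (lam : ℝ) (hω1 : ω 1 = (lam : ℂ)) {n : ℕ} (x : Fin n → N)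
    (m : ℕ) :
    (∑ f : Fin n → Fin m, ∏ j : Fin m, ω (ordProd x (fib f j)))
      = ∑ σ : Finpartition (univ : Finset (Fin n)),
          ((m.descFactorial σ.parts.card : ℕ) : ℂ) *
            ((∏ A ∈ σ.parts, ω (ordProd x A)) * (lam : ℂ) ^ (m - σ.parts.card)) := by
  classical
  rw [← Finset.sum_fiberwise univ (fun f : Fin n → Fin m => kerPart f)
    (fun f => ∏ j, ω (ordProd x (fib f j)))]
  refine Finset.sum_congr rfl fun σ _ => ?_
  have hconst : ∀ f ∈ univ.filter (fun f : Fin n → Fin m => kerPart f = σ),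
      (∏ j, ω (ordProd x (fib f j)))
        = (∏ A ∈ σ.parts, ω (ordProd x A)) * (lam : ℂ) ^ (m - σ.parts.card) := by
    intro f hf
    have hker := (Finset.mem_filter.mp hf).2
    rw [prod_fib_eq ω lam hω1 x f, hker]
  rw [Finset.sum_congr rfl hconst, Finset.sum_const, card_ker_eq, nsmul_eq_mul]

end Aux

set_option maxHeartbeats 1000000

/-- **Moment formula for the Poisson state**: for a linear functional `ω` on a unital
algebra `N` with `ω(1) = λ`,
`e^{-λ} ∑_{m≥0} (1/m!) ω^{⊗m}(λ_m(x_1) ⋯ λ_m(x_n)) = ∑_{σ ∈ P(n)} ∏_{A ∈ σ} ω(→∏_{i∈A} x_i)`,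
the sum on the right running over all set partitions of `{1, …, n}`. -/
theorem poisson_moment_formula (ω : N →ₗ[ℂ] ℂ) (lam : ℝ) (hlam : 0 < lam)
    (hω1 : ω 1 = lam) (n : ℕ) (x : Fin n → N) :
    (Real.exp (-lam) : ℂ) *
        ∑' m : ℕ, (1 / m.factorial : ℂ) *
          tensorFunctional ω m ((List.ofFn fun i : Fin n => lamM m (x i)).prod)
      = ∑ σ : Finpartition (Finset.univ : Finset (Fin n)),
          ∏ A ∈ σ.parts, ω (ordProd x A) := by
  classical
  have hterm : ∀ m : ℕ,
      (1 / m.factorial : ℂ) *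
          tensorFunctional ω m ((List.ofFn fun i : Fin n => lamM m (x i)).prod)
        = ∑ σ : Finpartition (univ : Finset (Fin n)),
            (1 / m.factorial : ℂ) * (((m.descFactorial σ.parts.card : ℕ) : ℂ) *
              ((∏ A ∈ σ.parts, ω (ordProd x A)) * (lam : ℂ) ^ (m - σ.parts.card))) := by
    intro m
    rw [key_expand, sum_over_f ω lam hω1 x m, Finset.mul_sum]
  rw [tsum_congr hterm,
    Summable.tsum_finsetSum (fun σ _ => desc_summable lam σ.parts.card (∏ A ∈ σ.parts, ω (ordProd x A))),
    Finset.mul_sum]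
  refine Finset.sum_congr rfl fun σ _ => ?_
  rw [desc_tsum lam σ.parts.card (∏ A ∈ σ.parts, ω (ordProd x A))]
  have hre : (Real.exp (-lam) : ℂ) = Complex.exp (-(lam : ℂ)) := by
    rw [← Complex.ofReal_neg, Complex.ofReal_exp]
  rw [hre, ← mul_assoc, ← Complex.exp_add, neg_add_cancel, Complex.exp_zero, one_mul]
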